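/- Let V be a 2-dimensional oriented real inner product space with complex structure J (rotation by π/2), and N a real inner product space. Suppose h : Sym²(V) → N is symmetric bilinear with trace zero (h(e₁,e₁) + h(e₂,e₂) = 0 for an orthonormal basis (e₁,e₂)). If Ĵ : N → N is an orthogonal complex structure and R₁₂ : N → N is the skew endomorphism determined by the Ricci equation ⟨R₁₂ ξ, ζ⟩ = 2(⟨h(e₁,e₁),ζ⟩⟨h(e₁,e₂),ξ⟩ − ⟨h(e₁,e₁),ξ⟩⟨h(e₁,e₂),ζ⟩) appropriately extended, and if h(e₁,e₁) = κ₁ n₃ + κ₂ n₄, h(e₁,e₂) = −κ₂ n₃ + κ₁ n₄ for an orthonormal basis (n₃,n₄,n₅,n₆) of N with Ĵn₃ = n₄, Ĵn₅ = −n₆, then the operator B(ξ) := Σ_{i,j} ⟨h(eᵢ,eⱼ), ξ⟩ h(eᵢ,eⱼ) satisfies B(ξ) = Ĵ R₁₂ ξ for all ξ ∈ N, where R₁₂ n₃ = −2|κ|² Ĵn₃, R₁₂ n₄ = −2|κ|² Ĵn₄, R₁₂ n₅ = R₁₂ n₆ = 0 and |κ|² = κ₁² + κ₂². -/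
import Mathlib


open scoped RealInnerProductSpace

/-- Pointwise linear-algebra content of Proposition 4.3: with the second
fundamental form h of a null-torsion holomorphic curve in a T²-adapted frame,
h(e₁,e₁) = κ₁n₃ + κ₂n₄, h(e₁,e₂) = −κ₂n₃ + κ₁n₄, h(e₂,e₂) = −h(e₁,e₁),
with Ĵ the orthogonal complex structure with Ĵn₃ = n₄, Ĵn₅ = −n₆, and with
R₁₂ determined by R₁₂n₃ = −2|κ|²Ĵn₃, R₁₂n₄ = −2|κ|²Ĵn₄, R₁₂n₅ = R₁₂n₆ = 0
(the Ricci equation), the Simons operator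
B(ξ) = Σ_{i,j}⟨h(eᵢ,eⱼ),ξ⟩h(eᵢ,eⱼ) satisfies B(ξ) = Ĵ R₁₂ ξ for all ξ ∈ N. -/
theorem simons_operator_eq_J_curvature
    {N : Type*} [NormedAddCommGroup N] [InnerProductSpace ℝ N]
    (n₃ n₄ n₅ n₆ : N)
    (hON : Orthonormal ℝ ![n₃, n₄, n₅, n₆])
    (hspan : Submodule.span ℝ {n₃, n₄, n₅, n₆} = ⊤)
    (Jhat R₁₂ : N →ₗ[ℝ] N)
    (hJsq : ∀ ξ, Jhat (Jhat ξ) = -ξ)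
    (hJiso : ∀ ξ ζ, ⟪Jhat ξ, Jhat ζ⟫ = ⟪ξ, ζ⟫)
    (hJ3 : Jhat n₃ = n₄) (hJ5 : Jhat n₅ = -n₆)
    (κ₁ κ₂ : ℝ) (h : Fin 2 → Fin 2 → N)
    (h00 : h 0 0 = κ₁ • n₃ + κ₂ • n₄)
    (h01 : h 0 1 = (-κ₂) • n₃ + κ₁ • n₄)
    (h10 : h 1 0 = h 0 1)
    (h11 : h 1 1 = - h 0 0)
    (hR3 : R₁₂ n₃ = (-2 * (κ₁ ^ 2 + κ₂ ^ 2)) • Jhat n₃)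
    (hR4 : R₁₂ n₄ = (-2 * (κ₁ ^ 2 + κ₂ ^ 2)) • Jhat n₄)
    (hR5 : R₁₂ n₅ = 0) (hR6 : R₁₂ n₆ = 0) :
    ∀ ξ : N, (∑ i : Fin 2, ∑ j : Fin 2, ⟪h i j, ξ⟫ • h i j) = Jhat (R₁₂ ξ) := by
  have hin := orthonormal_iff_ite.mp hON
  have i33 : ⟪n₃, n₃⟫ = 1 := by simpa using hin 0 0
  have i34 : ⟪n₃, n₄⟫ = 0 := by simpa using hin 0 1
  have i35 : ⟪n₃, n₅⟫ = 0 := by simpa using hin 0 2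
  have i36 : ⟪n₃, n₆⟫ = 0 := by simpa using hin 0 3
  have i43 : ⟪n₄, n₃⟫ = 0 := by simpa using hin 1 0
  have i44 : ⟪n₄, n₄⟫ = 1 := by simpa using hin 1 1
  have i45 : ⟪n₄, n₅⟫ = 0 := by simpa using hin 1 2
  have i46 : ⟪n₄, n₆⟫ = 0 := by simpa using hin 1 3
  have hJ4 : Jhat n₄ = -n₃ := by rw [← hJ3, hJsq]
  intro ξ
  have hmem : ξ ∈ Submodule.span ℝ ({n₃, n₄, n₅, n₆} : Set N) := hspan ▸ Submodule.mem_top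
  induction hmem using Submodule.span_induction with
  | mem x hx =>
    rcases hx with rfl | rfl | rfl | rfl
    · simp only [Fin.sum_univ_two, h00, h01, h10, h11, hR3, hJ3,
        inner_add_left, real_inner_smul_left, inner_neg_left, i33, i34, i43, i44,
        map_smul, map_neg, hJ4, hJ3]
      module
    · simp only [Fin.sum_univ_two, h00, h01, h10, h11, hR4, hJ3,
        inner_add_left, real_inner_smul_left, inner_neg_left, i33, i34, i43, i44,
        map_smul, map_neg, hJ4, hJ3]
      module
    · simp only [Fin.sum_univ_two, h00, h01, h10, h11, hR5,
        inner_add_left, real_inner_smul_left, inner_neg_left, i35, i45, map_zero]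
      module
    · simp only [Fin.sum_univ_two, h00, h01, h10, h11, hR6,
        inner_add_left, real_inner_smul_left, inner_neg_left, i36, i46, map_zero]
      module
  | zero => simp
  | add x y hx hy ihx ihy =>
    simp only [inner_add_right, add_smul, Finset.sum_add_distrib, map_add, ihx, ihy]
  | smul a x hx ihx =>
    simp only [inner_smul_right, mul_smul, ← Finset.smul_sum, map_smul, ihx]
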